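/- Let r, K, a, b, c, δ, h, w be positive real numbers with b < (c/(2δ))², set D₂ = c² − 4bδ², N₄ = (c + √D₂)/(2δ), P₄ = r(b+N₄²)((K−w)N₄ − K(h−w) − N₄²)/(K·a·(w+N₄)), and suppose P₄ > 0. Then the Jacobian matrix J₄ = !![hrN₄/(w+N₄)² + 2aN₄²P₄/(b+N₄²)² − rN₄/K, −δ/c; (c − 2δN₄)P₄/(b+N₄²), 0] has negative determinant, and consequently J₄ has a complex eigenvalue with positive real part and a complex eigenvalue with negative real part; in particular the coexistence equilibrium E₄ = (N₄, P₄) is unstable. -/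

import Mathlib

set_option maxHeartbeats 1000000

lemma mem_spec2 (M : Matrix (Fin 2) (Fin 2) ℂ) (μ : ℂ)
    (hμ : (μ - M 0 0) * (μ - M 1 1) - M 0 1 * M 1 0 = 0) : μ ∈ spectrum ℂ M := by
  rw [spectrum.mem_iff]
  intro hu
  rw [Matrix.isUnit_iff_isUnit_det] at hu
  have hdet : (algebraMap ℂ (Matrix (Fin 2) (Fin 2) ℂ) μ - M).det = 0 := by
    rw [Matrix.det_fin_two]
    simp only [Matrix.sub_apply, Matrix.algebraMap_matrix_apply]
    norm_num
    linear_combination hμ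
  rw [hdet] at hu
  exact (by simp at hu)

theorem coexistence_E4_unstable (r K a b c δ h w D₂ N₄ P₄ : ℝ)
    (hr : 0 < r) (hK : 0 < K) (ha : 0 < a) (hb : 0 < b) (hc : 0 < c)
    (hδ : 0 < δ) (hh : 0 < h) (hw : 0 < w) (hlt : b < (c / (2 * δ)) ^ 2)
    (hD : D₂ = c ^ 2 - 4 * b * δ ^ 2)
    (hN₄ : N₄ = (c + Real.sqrt D₂) / (2 * δ))
    (hP₄ : P₄ = r * (b + N₄ ^ 2) * ((K - w) * N₄ - K * (h - w) - N₄ ^ 2) /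
      (K * a * (w + N₄)))
    (hP₄pos : 0 < P₄)
    (J₄ : Matrix (Fin 2) (Fin 2) ℝ)
    (hJ : J₄ = !![h * r * N₄ / (w + N₄) ^ 2 + 2 * a * N₄ ^ 2 * P₄ / (b + N₄ ^ 2) ^ 2
        - r * N₄ / K, -(δ / c);
      (c - 2 * δ * N₄) * P₄ / (b + N₄ ^ 2), 0]) :
    J₄.det < 0 ∧
    (∃ μ ∈ spectrum ℂ (J₄.map (Complex.ofReal)), 0 < μ.re) ∧
    (∃ ν ∈ spectrum ℂ (J₄.map (Complex.ofReal)), ν.re < 0) := by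
  have hD₂pos : 0 < D₂ := by
    have key : (c / (2 * δ)) ^ 2 * (2 * δ) ^ 2 = c ^ 2 := by field_simp
    rw [hD]
    nlinarith [mul_lt_mul_of_pos_right hlt (show (0:ℝ) < (2 * δ) ^ 2 by positivity)]
  have hsqD : Real.sqrt D₂ > 0 := Real.sqrt_pos.2 hD₂pos
  have hcN : c - 2 * δ * N₄ = -Real.sqrt D₂ := by
    rw [hN₄]; field_simp; ring
  have hCneg : (c - 2 * δ * N₄) * P₄ / (b + N₄ ^ 2) < 0 := by
    rw [hcN]
    have hbN : (0:ℝ) < b + N₄ ^ 2 := by positivity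
    exact div_neg_of_neg_of_pos (by nlinarith) hbN
  -- entries
  set A := h * r * N₄ / (w + N₄) ^ 2 + 2 * a * N₄ ^ 2 * P₄ / (b + N₄ ^ 2) ^ 2
        - r * N₄ / K with hA
  set C := (c - 2 * δ * N₄) * P₄ / (b + N₄ ^ 2) with hC
  have hdet : J₄.det = δ / c * C := by
    rw [hJ, Matrix.det_fin_two_of]; ring
  have hdetneg : J₄.det < 0 := by
    rw [hdet]
    exact mul_neg_of_pos_of_neg (by positivity) hCneg
  clear_value A C
  set d := J₄.det with hd
  clear_value d
  set s := Real.sqrt (A ^ 2 - 4 * d) with hs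
  have hs2 : s ^ 2 = A ^ 2 - 4 * d := Real.sq_sqrt (by nlinarith [sq_nonneg A])
  have hs0 : 0 ≤ s := Real.sqrt_nonneg _
  clear_value s
  have hsA : |A| < s := by nlinarith [sq_abs A, abs_nonneg A]
  have h1 : -s < A := by nlinarith [neg_abs_le A]
  have h2 : A < s := lt_of_le_of_lt (le_abs_self A) hsA
  have key : ∀ t : ℝ, (t - A) * t + d = 0 →
      ((t : ℂ) ∈ spectrum ℂ (J₄.map Complex.ofReal)) := by
    intro t ht
    apply mem_spec2
    have hmap : ∀ i j, (J₄.map Complex.ofReal) i j = ((J₄ i j : ℝ) : ℂ) := fun i j => rfl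
    rw [hmap, hmap, hmap, hmap, hJ]
    have e00 : (!![A, -(δ / c); C, 0] : Matrix (Fin 2) (Fin 2) ℝ) 0 0 = A := rfl
    have e01 : (!![A, -(δ / c); C, 0] : Matrix (Fin 2) (Fin 2) ℝ) 0 1 = -(δ / c) := rfl
    have e10 : (!![A, -(δ / c); C, 0] : Matrix (Fin 2) (Fin 2) ℝ) 1 0 = C := rfl
    have e11 : (!![A, -(δ / c); C, 0] : Matrix (Fin 2) (Fin 2) ℝ) 1 1 = 0 := rfl
    rw [e00, e01, e10, e11]
    have hre : (t - A) * (t - 0) - -(δ / c) * C = 0 := by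
      linear_combination ht - hdet
    push_cast
    exact_mod_cast congrArg (Complex.ofReal) hre
  refine ⟨hdetneg, ⟨((A + s) / 2 : ℝ), key _ (by linear_combination hs2 / 4), ?_⟩,
    ⟨((A - s) / 2 : ℝ), key _ (by linear_combination hs2 / 4), ?_⟩⟩
  · rw [Complex.ofReal_re]; nlinarith
  · rw [Complex.ofReal_re]; nlinarith
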